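/- arXiv:1301.6944 — 3 statements merged into one kernel-verified Lean document; each statement's English description precedes it below -/
import Mathlib

section
/- Under the assumptions on L and k, the operator K_P : H → H, f ↦ 2λf + E_P[L''(X,Y,f_{L,P,λ}(X)) f(X) Φ(X)], is a well-defined continuous linear operator on H. -/
open MeasureTheory
open scoped RealInnerProductSpace

/-- Under the assumptions on `L` and `k`, the operator
`K_P : f ↦ 2λf + E_P[L''(X,Y,f_{L,P,λ}(X)) f(X) Φ(X)]` is a well-defined continuous
linear operator on the RKHS `H`.  The RKHS is modeled via a bounded feature map `Φ`
with the reproducing property; the expectation is a Bochner integral in `H`. -/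
theorem stmt4
    (X Y : Type*) [TopologicalSpace X] [CompactSpace X] [MeasurableSpace X]
    [BorelSpace X] [MeasurableSpace Y]
    (H : Type*) [NormedAddCommGroup H] [InnerProductSpace ℝ H] [CompleteSpace H]
    (Φ : X → H) (hΦcont : Continuous Φ)
    (Ck : ℝ) (hΦbdd : ∀ x : X, ‖Φ x‖ ≤ Ck)
    (P : Measure (X × Y)) [IsProbabilityMeasure P]
    (L'' : X → Y → ℝ → ℝ)
    (hL''nonneg : ∀ x y t, 0 ≤ L'' x y t)
    (hL''meas : Measurable fun p : (X × Y) × ℝ => L'' p.1.1 p.1.2 p.2)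
    (hL''bdd : ∀ a : ℝ, 0 < a → ∃ C : ℝ, ∀ x y t, |t| ≤ a → |L'' x y t| ≤ C)
    (lam : ℝ) (hlam : 0 < lam)
    (fP : H) :
    ∃ K : H →L[ℝ] H,
      ∀ f : H,
        K f = (2 * lam) • f +
          ∫ z : X × Y, (L'' z.1 z.2 (⟪fP, Φ z.1⟫) * ⟪f, Φ z.1⟫) • Φ z.1 ∂P := by
  -- X × Y is nonempty since it carries a probability measure
  have hne : Nonempty (X × Y) := by
    by_contra h
    rw [not_nonempty_iff] at h
    have : P Set.univ = 1 := measure_univ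
    rw [Set.univ_eq_empty_iff.mpr h, measure_empty] at this
    exact zero_ne_one this
  obtain ⟨z0⟩ := hne
  have hCk0 : 0 ≤ Ck := le_trans (norm_nonneg _) (hΦbdd z0.1)
  -- bound on the inner product argument
  set a : ℝ := Ck * ‖fP‖ + 1 with ha_def
  have ha : 0 < a := by positivity
  obtain ⟨C, hC⟩ := hL''bdd a ha
  have hC0 : 0 ≤ C := le_trans (abs_nonneg _) (hC z0.1 z0.2 0 (by simpa using le_of_lt ha))
  have hinner : ∀ z : X × Y, |⟪fP, Φ z.1⟫| ≤ a := by
    intro z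
    calc |⟪fP, Φ z.1⟫| ≤ ‖fP‖ * ‖Φ z.1‖ := abs_real_inner_le_norm _ _
      _ ≤ ‖fP‖ * Ck := by
          exact mul_le_mul_of_nonneg_left (hΦbdd z.1) (norm_nonneg _)
      _ ≤ a := by rw [ha_def]; nlinarith
  have hLbound : ∀ z : X × Y, |L'' z.1 z.2 (⟪fP, Φ z.1⟫)| ≤ C := fun z =>
    hC z.1 z.2 _ (hinner z)
  -- measurability
  have hΦm : StronglyMeasurable fun z : X × Y => Φ z.1 := by
    borelize H
    rw [stronglyMeasurable_iff_measurable_separable]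
    refine ⟨(hΦcont.measurable).comp measurable_fst, ?_⟩
    have : IsCompact (Set.range Φ) := isCompact_range hΦcont
    exact (this.isSeparable).mono (by rintro _ ⟨z, rfl⟩; exact ⟨z.1, rfl⟩)
  have hinnerm : ∀ g : H, Measurable fun z : X × Y => ⟪g, Φ z.1⟫ := fun g =>
    ((continuous_const.inner continuous_id).comp_stronglyMeasurable hΦm).measurable
  have hLm : Measurable fun z : X × Y => L'' z.1 z.2 (⟪fP, Φ z.1⟫) :=
    hL''meas.comp (measurable_id.prodMk (hinnerm fP))
  have hsm : ∀ f : H, StronglyMeasurable fun z : X × Y =>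
      (L'' z.1 z.2 (⟪fP, Φ z.1⟫) * ⟪f, Φ z.1⟫) • Φ z.1 := fun f =>
    ((hLm.mul (hinnerm f)).stronglyMeasurable).smul hΦm
  -- uniform bound on the integrand
  have hbound : ∀ f : H, ∀ z : X × Y,
      ‖(L'' z.1 z.2 (⟪fP, Φ z.1⟫) * ⟪f, Φ z.1⟫) • Φ z.1‖ ≤ C * Ck * Ck * ‖f‖ := by
    intro f z
    rw [norm_smul]
    calc ‖L'' z.1 z.2 (⟪fP, Φ z.1⟫) * ⟪f, Φ z.1⟫‖ * ‖Φ z.1‖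
        ≤ (C * (‖f‖ * Ck)) * Ck := by
          apply mul_le_mul _ (hΦbdd z.1) (norm_nonneg _) (by positivity)
          rw [norm_mul]
          apply mul_le_mul (hLbound z) _ (norm_nonneg _) hC0
          calc ‖⟪f, Φ z.1⟫‖ ≤ ‖f‖ * ‖Φ z.1‖ := abs_real_inner_le_norm _ _
            _ ≤ ‖f‖ * Ck := mul_le_mul_of_nonneg_left (hΦbdd z.1) (norm_nonneg _)
      _ = C * Ck * Ck * ‖f‖ := by ring
  have hInt : ∀ f : H, Integrable
      (fun z : X × Y => (L'' z.1 z.2 (⟪fP, Φ z.1⟫) * ⟪f, Φ z.1⟫) • Φ z.1) P := by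
    intro f
    refine ⟨(hsm f).aestronglyMeasurable, ?_⟩
    exact HasFiniteIntegral.of_bounded (C := C * Ck * Ck * ‖f‖)
      (Filter.Eventually.of_forall (hbound f))
  -- the linear map
  set T : H →ₗ[ℝ] H :=
    { toFun := fun f => (2 * lam) • f +
        ∫ z : X × Y, (L'' z.1 z.2 (⟪fP, Φ z.1⟫) * ⟪f, Φ z.1⟫) • Φ z.1 ∂P
      map_add' := by
        intro f g
        have : (fun z : X × Y =>
            (L'' z.1 z.2 (⟪fP, Φ z.1⟫) * ⟪f + g, Φ z.1⟫) • Φ z.1) =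
            fun z => (L'' z.1 z.2 (⟪fP, Φ z.1⟫) * ⟪f, Φ z.1⟫) • Φ z.1 +
              (L'' z.1 z.2 (⟪fP, Φ z.1⟫) * ⟪g, Φ z.1⟫) • Φ z.1 := by
          funext z
          rw [inner_add_left, mul_add, add_smul]
        simp only [this, smul_add]
        rw [integral_add (hInt f) (hInt g)]
        abel
      map_smul' := by
        intro c f
        have : (fun z : X × Y =>
            (L'' z.1 z.2 (⟪fP, Φ z.1⟫) * ⟪c • f, Φ z.1⟫) • Φ z.1) =
            fun z => c • ((L'' z.1 z.2 (⟪fP, Φ z.1⟫) * ⟪f, Φ z.1⟫) • Φ z.1) := by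
          funext z
          rw [real_inner_smul_left, smul_smul]
          ring_nf
        simp only [this, RingHom.id_apply]
        rw [integral_smul, smul_add, smul_smul, smul_smul]
        ring_nf } with hT
  refine ⟨T.mkContinuous (2 * lam + C * Ck * Ck) ?_, fun f => rfl⟩
  intro f
  have h1 : ‖∫ z : X × Y, (L'' z.1 z.2 (⟪fP, Φ z.1⟫) * ⟪f, Φ z.1⟫) • Φ z.1 ∂P‖ ≤
      C * Ck * Ck * ‖f‖ := by
    have := norm_integral_le_of_norm_le_const (μ := P)
      (C := C * Ck * Ck * ‖f‖) (Filter.Eventually.of_forall (hbound f))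
    simpa using this
  calc ‖T f‖ ≤ ‖(2 * lam) • f‖ +
      ‖∫ z : X × Y, (L'' z.1 z.2 (⟪fP, Φ z.1⟫) * ⟪f, Φ z.1⟫) • Φ z.1 ∂P‖ :=
        norm_add_le _ _
    _ ≤ (2 * lam) * ‖f‖ + C * Ck * Ck * ‖f‖ := by
        rw [norm_smul]
        gcongr
        simp [abs_of_pos hlam, abs_of_nonneg, le_of_lt hlam]
    _ = (2 * lam + C * Ck * Ck) * ‖f‖ := by ring
end

section
/- Let H be a Hilbert space, λ > 0, and for a probability measure P define G_P : H → H by G_P(f) = 2λf + E_P[L'(X,Y,f(X)) Φ(X)] (a Bochner integral). If f_P minimizes f ↦ E_P[L(X,Y,f(X))] + λ||f||²_H over H and L is convex and continuously differentiable in t with the domination conditions, then G_P(f_P) = 0. -/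
open MeasureTheory
open scoped RealInnerProductSpace

/-- First-order optimality condition for the SVM: if `f_P` minimizes
`f ↦ E_P[L(X,Y,f(X))] + λ‖f‖²` over the RKHS `H`, where `L` is convex and continuously
differentiable in `t` with derivative `L'` dominated on bounded intervals, then
`G_P(f_P) = 2λ f_P + E_P[L'(X,Y,f_P(X)) Φ(X)] = 0` (a Bochner integral in `H`). -/
theorem stmt12
    (X Y : Type*) [MeasurableSpace X] [MeasurableSpace Y]
    (H : Type*) [NormedAddCommGroup H] [InnerProductSpace ℝ H] [CompleteSpace H]
    (Φ : X → H) (Ck : ℝ) (hΦbdd : ∀ x : X, ‖Φ x‖ ≤ Ck)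
    (P : Measure (X × Y)) [IsProbabilityMeasure P]
    (L : X → Y → ℝ → ℝ) (L' : X → Y → ℝ → ℝ)
    (hLconv : ∀ x y, ConvexOn ℝ Set.univ (L x y))
    (hderiv : ∀ x y t, HasDerivAt (L x y) (L' x y t) t)
    (hL'cont : ∀ x y, Continuous (L' x y))
    (hdom : ∀ a : ℝ, 0 < a → ∃ b'a : X × Y → ℝ, Integrable b'a P ∧
      ∀ x y t, |t| ≤ a → |L' x y t| ≤ b'a (x, y))
    (lam : ℝ) (hlam : 0 < lam)
    (hLint : ∀ f : H, Integrable (fun z : X × Y => L z.1 z.2 (⟪f, Φ z.1⟫)) P)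
    (fP : H)
    (hmin : ∀ f : H,
      (∫ z, L z.1 z.2 (⟪fP, Φ z.1⟫) ∂P) + lam * ‖fP‖ ^ 2 ≤
        (∫ z, L z.1 z.2 (⟪f, Φ z.1⟫) ∂P) + lam * ‖f‖ ^ 2)
    (hint : Integrable (fun z : X × Y => L' z.1 z.2 (⟪fP, Φ z.1⟫) • Φ z.1) P) :
    (2 * lam) • fP + ∫ z, L' z.1 z.2 (⟪fP, Φ z.1⟫) • Φ z.1 ∂P = 0 := by
  set I := ∫ z, L' z.1 z.2 (⟪fP, Φ z.1⟫) • Φ z.1 ∂P with hI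
  have key : ∀ h : H, ⟪h, (2 * lam) • fP + I⟫ = 0 := by
    intro h
    set Ck' := max Ck 0 with hCk'
    have hΦ' : ∀ x, ‖Φ x‖ ≤ Ck' := fun x => le_max_of_le_left (hΦbdd x)
    have hCk'0 : 0 ≤ Ck' := le_max_right _ _
    set a : ℝ := (‖fP‖ + ‖h‖) * Ck' + 1 with ha
    have hapos : 0 < a := by positivity
    obtain ⟨b, hbint, hb⟩ := hdom a hapos
    set F : ℝ → X × Y → ℝ := fun t z => L z.1 z.2 (⟪fP, Φ z.1⟫ + t * ⟪h, Φ z.1⟫) with hF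
    set F' : ℝ → X × Y → ℝ :=
      fun t z => L' z.1 z.2 (⟪fP, Φ z.1⟫ + t * ⟪h, Φ z.1⟫) * ⟪h, Φ z.1⟫ with hF'
    have hinner : ∀ (t : ℝ) (z : X × Y),
        ⟪fP, Φ z.1⟫ + t * ⟪h, Φ z.1⟫ = ⟪fP + t • h, Φ z.1⟫ := by
      intro t z; rw [inner_add_left, real_inner_smul_left]
    have hFeq : ∀ t : ℝ, F t = fun z : X × Y => L z.1 z.2 (⟪fP + t • h, Φ z.1⟫) := by
      intro t; funext z; simp only [hF, hinner]
    have hFint : ∀ t : ℝ, Integrable (F t) P := by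
      intro t; rw [hFeq t]; exact hLint (fP + t • h)
    -- bound on the inner product argument, for t in ball 0 1
    have harg : ∀ (t : ℝ), |t| < 1 → ∀ z : X × Y,
        |⟪fP, Φ z.1⟫ + t * ⟪h, Φ z.1⟫| ≤ a := by
      intro t ht z
      rw [hinner]
      calc |⟪fP + t • h, Φ z.1⟫| ≤ ‖fP + t • h‖ * ‖Φ z.1‖ := abs_real_inner_le_norm _ _
        _ ≤ (‖fP‖ + ‖h‖) * Ck' := by
            apply mul_le_mul _ (hΦ' _) (norm_nonneg _) (by positivity)
            calc ‖fP + t • h‖ ≤ ‖fP‖ + ‖t • h‖ := norm_add_le _ _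
              _ ≤ ‖fP‖ + ‖h‖ := by
                  rw [norm_smul]
                  have : ‖t‖ * ‖h‖ ≤ 1 * ‖h‖ :=
                    mul_le_mul_of_nonneg_right (le_of_lt ht) (norm_nonneg _)
                  simpa using add_le_add_left this ‖fP‖
        _ ≤ a := by rw [ha]; linarith
    -- the derivative-under-integral step
    have hDI : HasDerivAt (fun t => ∫ z, F t z ∂P) (∫ z, F' 0 z ∂P) 0 := by
      have hF'0 : F' 0 = fun z : X × Y => ⟪h, L' z.1 z.2 (⟪fP, Φ z.1⟫) • Φ z.1⟫ := by
        funext z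
        simp [hF', real_inner_smul_right, mul_comm]
      refine (hasDerivAt_integral_of_dominated_loc_of_deriv_le (F := F) (F' := F')
        (bound := fun z => b z * (‖h‖ * Ck')) (Metric.ball_mem_nhds (0 : ℝ) one_pos)
        (Filter.Eventually.of_forall fun t => (hFint t).aestronglyMeasurable)
        (hFint 0) ?_ ?_ (hbint.mul_const _) ?_).2
      · rw [hF'0]
        exact (InnerProductSpace.toDualMap ℝ H h).continuous.comp_aestronglyMeasurable
          hint.aestronglyMeasurable |>.congr (Filter.Eventually.of_forall fun z => rfl)
      · refine Filter.Eventually.of_forall fun z => fun t ht => ?_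
        rw [Metric.mem_ball, Real.dist_eq, sub_zero] at ht
        have h1 : |L' z.1 z.2 (⟪fP, Φ z.1⟫ + t * ⟪h, Φ z.1⟫)| ≤ b z := by
          have := hb z.1 z.2 _ (harg t ht z)
          simpa using this
        have h2 : |⟪h, Φ z.1⟫| ≤ ‖h‖ * Ck' := by
          calc |⟪h, Φ z.1⟫| ≤ ‖h‖ * ‖Φ z.1‖ := abs_real_inner_le_norm _ _
            _ ≤ ‖h‖ * Ck' := mul_le_mul_of_nonneg_left (hΦ' _) (norm_nonneg _)
        have hbz : 0 ≤ b z := le_trans (abs_nonneg _) h1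
        calc ‖F' t z‖ = |L' z.1 z.2 (⟪fP, Φ z.1⟫ + t * ⟪h, Φ z.1⟫)| * |⟪h, Φ z.1⟫| := by
              simp [hF', Real.norm_eq_abs, abs_mul]
          _ ≤ b z * (‖h‖ * Ck') :=
              mul_le_mul h1 h2 (abs_nonneg _) hbz
      · refine Filter.Eventually.of_forall fun z => fun t _ => ?_
        have hin : HasDerivAt (fun s : ℝ => ⟪fP, Φ z.1⟫ + s * ⟪h, Φ z.1⟫) ⟪h, Φ z.1⟫ t := by
          simpa using (hasDerivAt_id t).mul_const (⟪h, Φ z.1⟫) |>.const_add (⟪fP, Φ z.1⟫)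
        exact (hderiv z.1 z.2 _).comp t hin
    -- derivative of the regularizer
    have hreg : HasDerivAt (fun t : ℝ => lam * ‖fP + t • h‖ ^ 2) (2 * lam * ⟪fP, h⟫) 0 := by
      have hexp : (fun t : ℝ => lam * ‖fP + t • h‖ ^ 2) =
          fun t : ℝ => lam * (‖fP‖ ^ 2 + 2 * (t * ⟪fP, h⟫) + t ^ 2 * ‖h‖ ^ 2) := by
        funext t
        rw [@norm_add_sq_real, real_inner_smul_right, norm_smul, mul_pow,
          Real.norm_eq_abs, sq_abs]
      rw [hexp]
      have h1 : HasDerivAt (fun t : ℝ => t * ⟪fP, h⟫) ⟪fP, h⟫ 0 := by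
        simpa using (hasDerivAt_id (0 : ℝ)).mul_const (⟪fP, h⟫)
      have h2 : HasDerivAt (fun t : ℝ => t ^ 2 * ‖h‖ ^ 2) 0 0 := by
        simpa using (hasDerivAt_pow 2 (0 : ℝ)).mul_const (‖h‖ ^ 2)
      have := (((h1.const_mul (2 : ℝ)).const_add (‖fP‖ ^ 2)).add h2).const_mul lam
      refine this.congr_deriv ?_
      ring
    -- the full objective
    set g : ℝ → ℝ := fun t => (∫ z, F t z ∂P) + lam * ‖fP + t • h‖ ^ 2 with hg
    have hgderiv : HasDerivAt g ((∫ z, F' 0 z ∂P) + 2 * lam * ⟪fP, h⟫) 0 := hDI.add hreg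
    have hglobal : ∀ t : ℝ, g 0 ≤ g t := by
      intro t
      have := hmin (fP + t • h)
      simp only [hg, hFeq]
      simpa using this
    have hloc : IsLocalMin g 0 := Filter.Eventually.of_forall hglobal
    have hzero : (∫ z, F' 0 z ∂P) + 2 * lam * ⟪fP, h⟫ = 0 :=
      hloc.hasDerivAt_eq_zero hgderiv
    have hF'int : (∫ z, F' 0 z ∂P) = ⟪h, I⟫ := by
      have hF'0 : F' 0 = fun z : X × Y => ⟪h, L' z.1 z.2 (⟪fP, Φ z.1⟫) • Φ z.1⟫ := by
        funext z
        simp [hF', real_inner_smul_right, mul_comm]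
      rw [hF'0, hI, ← integral_inner hint]
    rw [hF'int] at hzero
    have hc : ⟪h, fP⟫ = ⟪fP, h⟫ := real_inner_comm fP h
    rw [inner_add_right, real_inner_smul_right, hc]
    linarith
  have := key ((2 * lam) • fP + I)
  rwa [inner_self_eq_zero] at this
end

section
/- Under the stated assumptions, the map Q ↦ f_{L,Q,λ} sending a probability measure to its SVM is Lipschitz-like in the following sense: ||f_{L,P,λ} − f_{L,Q,λ}||_H ≤ λ⁻¹ ||E_P[L'(X,Y,f_{L,Q,λ}(X)) Φ(X)] − E_Q[L'(X,Y,f_{L,Q,λ}(X)) Φ(X)]||_H. -/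
open MeasureTheory
open scoped RealInnerProductSpace

/-- Subgradient inequality for a convex differentiable function on ℝ. -/
private lemma convex_subgrad {g : ℝ → ℝ} {g' : ℝ → ℝ}
    (hconv : ConvexOn ℝ Set.univ g) (hd : ∀ t, HasDerivAt g (g' t) t)
    (s t : ℝ) : g' t * (s - t) ≤ g s - g t := by
  rcases lt_trichotomy t s with h | h | h
  · have hpos : 0 < s - t := by linarith
    have h2 : g' t ≤ (g s - g t) / (s - t) := by
      simpa [slope_def_field] using
        hconv.le_slope_of_hasDerivAt (Set.mem_univ t) (Set.mem_univ s) h (hd t)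
    calc g' t * (s - t) ≤ ((g s - g t) / (s - t)) * (s - t) :=
          mul_le_mul_of_nonneg_right h2 hpos.le
      _ = g s - g t := div_mul_cancel₀ _ (ne_of_gt hpos)
  · simp [h]
  · have h1 : slope g s t ≤ g' t :=
      hconv.slope_le_of_hasDerivAt (Set.mem_univ s) (Set.mem_univ t) h (hd t)
    have hpos : 0 < t - s := by linarith
    have h2 : (g t - g s) / (t - s) ≤ g' t := by
      simpa [slope_def_field] using h1
    have h3 : g t - g s ≤ g' t * (t - s) := by
      calc g t - g s = ((g t - g s) / (t - s)) * (t - s) :=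
            (div_mul_cancel₀ _ (ne_of_gt hpos)).symm
        _ ≤ g' t * (t - s) := mul_le_mul_of_nonneg_right h2 hpos.le
    nlinarith

/-- Two-sided bound on difference quotients of a convex differentiable function. -/
private lemma convex_quot_bounds {g : ℝ → ℝ} {g' : ℝ → ℝ}
    (hconv : ConvexOn ℝ Set.univ g) (hd : ∀ s, HasDerivAt g (g' s) s)
    (u a t : ℝ) (ht0 : 0 < t) (ht1 : t ≤ 1) :
    g' u * a ≤ (g (u + t * a) - g u) / t ∧
      (g (u + t * a) - g u) / t ≤ g (u + a) - g u := by
  constructor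
  · have h := convex_subgrad hconv hd (u + t * a) u
    have : g' u * (t * a) ≤ g (u + t * a) - g u := by simpa using h
    rw [le_div_iff₀ ht0]
    nlinarith
  · have hcvx := hconv.2 (Set.mem_univ u) (Set.mem_univ (u + a))
      (by linarith : (0:ℝ) ≤ 1 - t) ht0.le (by ring)
    have : g ((1 - t) • u + t • (u + a)) ≤ (1 - t) • g u + t • g (u + a) := hcvx
    have h2 : g (u + t * a) ≤ (1 - t) * g u + t * g (u + a) := by
      have he : (1 - t) • u + t • (u + a) = u + t * a := by
        simp [smul_eq_mul]; ring
      rw [he] at this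
      simpa [smul_eq_mul] using this
    rw [div_le_iff₀ ht0]
    nlinarith

/-- Lipschitz-like stability of SVMs with respect to the underlying
distribution: with `f_{L,P,λ}` and `f_{L,Q,λ}` the unique minimizers of the regularized
risks under `P` and `Q`,
`‖f_{L,P,λ} − f_{L,Q,λ}‖_H ≤ λ⁻¹ ‖E_P[L'(X,Y,f_{L,Q,λ}(X))Φ(X)] − E_Q[L'(X,Y,f_{L,Q,λ}(X))Φ(X)]‖_H`. -/
theorem stmt17
    (X Y : Type*) [MeasurableSpace X] [MeasurableSpace Y]
    (H : Type*) [NormedAddCommGroup H] [InnerProductSpace ℝ H] [CompleteSpace H]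
    (Φ : X → H) (Ck : ℝ) (hΦbdd : ∀ x : X, ‖Φ x‖ ≤ Ck)
    (P Q : Measure (X × Y)) [IsProbabilityMeasure P] [IsProbabilityMeasure Q]
    (L : X → Y → ℝ → ℝ) (L' : X → Y → ℝ → ℝ)
    (hLconv : ∀ x y, ConvexOn ℝ Set.univ (L x y))
    (hderiv : ∀ x y t, HasDerivAt (L x y) (L' x y t) t)
    (hL'cont : ∀ x y, Continuous (L' x y))
    (lam : ℝ) (hlam : 0 < lam)
    (hLintP : ∀ f : H, Integrable (fun z : X × Y => L z.1 z.2 (⟪f, Φ z.1⟫)) P)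
    (hLintQ : ∀ f : H, Integrable (fun z : X × Y => L z.1 z.2 (⟪f, Φ z.1⟫)) Q)
    (fP fQ : H)
    (hminP : ∀ f : H,
      (∫ z, L z.1 z.2 (⟪fP, Φ z.1⟫) ∂P) + lam * ‖fP‖ ^ 2 ≤
        (∫ z, L z.1 z.2 (⟪f, Φ z.1⟫) ∂P) + lam * ‖f‖ ^ 2)
    (hminQ : ∀ f : H,
      (∫ z, L z.1 z.2 (⟪fQ, Φ z.1⟫) ∂Q) + lam * ‖fQ‖ ^ 2 ≤
        (∫ z, L z.1 z.2 (⟪f, Φ z.1⟫) ∂Q) + lam * ‖f‖ ^ 2)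
    (hintPfP : Integrable (fun z : X × Y => L' z.1 z.2 (⟪fP, Φ z.1⟫) • Φ z.1) P)
    (hintPfQ : Integrable (fun z : X × Y => L' z.1 z.2 (⟪fQ, Φ z.1⟫) • Φ z.1) P)
    (hintQfQ : Integrable (fun z : X × Y => L' z.1 z.2 (⟪fQ, Φ z.1⟫) • Φ z.1) Q) :
    ‖fP - fQ‖ ≤ lam⁻¹ *
      ‖(∫ z, L' z.1 z.2 (⟪fQ, Φ z.1⟫) • Φ z.1 ∂P) -
        ∫ z, L' z.1 z.2 (⟪fQ, Φ z.1⟫) • Φ z.1 ∂Q‖ := by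
  classical
  set h : H := fP - fQ with hh
  set B : H := ∫ z, L' z.1 z.2 (⟪fQ, Φ z.1⟫) • Φ z.1 ∂P with hB
  set D : H := ∫ z, L' z.1 z.2 (⟪fQ, Φ z.1⟫) • Φ z.1 ∂Q with hD
  -- inner product with h of the integrands
  have hinnerP : ∫ z, (L' z.1 z.2 (⟪fQ, Φ z.1⟫)) * ⟪h, Φ z.1⟫ ∂P = ⟪h, B⟫ := by
    rw [hB, ← integral_inner hintPfQ h]
    congr 1; funext z; rw [real_inner_smul_right]
  have hinnerQ : ∫ z, (L' z.1 z.2 (⟪fQ, Φ z.1⟫)) * ⟪h, Φ z.1⟫ ∂Q = ⟪h, D⟫ := by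
    rw [hD, ← integral_inner hintQfQ h]
    congr 1; funext z; rw [real_inner_smul_right]
  have hintInnerP : Integrable (fun z : X × Y =>
      (L' z.1 z.2 (⟪fQ, Φ z.1⟫)) * ⟪h, Φ z.1⟫) P := by
    have := (innerSL ℝ h).integrable_comp hintPfQ
    simpa [real_inner_smul_right] using this
  have hintInnerQ : Integrable (fun z : X × Y =>
      (L' z.1 z.2 (⟪fQ, Φ z.1⟫)) * ⟪h, Φ z.1⟫) Q := by
    have := (innerSL ℝ h).integrable_comp hintQfQ
    simpa [real_inner_smul_right] using this
  -- Step A : ⟪h, B⟫ ≤ lam * (‖fQ‖² - ‖fP‖²)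
  have stepA : ⟪h, B⟫ ≤ lam * ‖fQ‖ ^ 2 - lam * ‖fP‖ ^ 2 := by
    have hpt : ∀ z : X × Y,
        (L' z.1 z.2 (⟪fQ, Φ z.1⟫)) * ⟪h, Φ z.1⟫ ≤
          L z.1 z.2 (⟪fP, Φ z.1⟫) - L z.1 z.2 (⟪fQ, Φ z.1⟫) := by
      intro z
      have := convex_subgrad (hLconv z.1 z.2) (hderiv z.1 z.2)
        (⟪fP, Φ z.1⟫) (⟪fQ, Φ z.1⟫)
      have heq : ⟪fP, Φ z.1⟫ - ⟪fQ, Φ z.1⟫ = ⟪h, Φ z.1⟫ := by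
        rw [hh, inner_sub_left]
      rw [heq] at this; exact this
    have hint : ∫ z, (L' z.1 z.2 (⟪fQ, Φ z.1⟫)) * ⟪h, Φ z.1⟫ ∂P ≤
        ∫ z, (L z.1 z.2 (⟪fP, Φ z.1⟫) - L z.1 z.2 (⟪fQ, Φ z.1⟫)) ∂P :=
      integral_mono hintInnerP ((hLintP fP).sub (hLintP fQ)) hpt
    rw [integral_sub (hLintP fP) (hLintP fQ)] at hint
    rw [hinnerP] at hint
    have hmin := hminP fQ
    linarith
  -- Step B : ⟪h, D⟫ + 2 * lam * ⟪fQ, h⟫ ≥ 0 via dominated convergence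
  have stepB : -(lam * (2 * ⟪fQ, h⟫)) ≤ ⟪h, D⟫ := by
    set t : ℕ → ℝ := fun n => 1 / (n + 1) with ht
    have ht0 : ∀ n, 0 < t n := fun n => by positivity
    have ht1 : ∀ n, t n ≤ 1 := fun n => by
      rw [ht]; rw [div_le_one (by positivity)]; simp
    set F : ℕ → X × Y → ℝ := fun n z =>
      (L z.1 z.2 (⟪fQ + t n • h, Φ z.1⟫) - L z.1 z.2 (⟪fQ, Φ z.1⟫)) / t n with hF
    have hinner_eq : ∀ n, ∀ z : X × Y,
        ⟪fQ + t n • h, Φ z.1⟫ = ⟪fQ, Φ z.1⟫ + t n * ⟪h, Φ z.1⟫ := by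
      intro n z; rw [inner_add_left, real_inner_smul_left]
    have hFint : ∀ n, Integrable (F n) Q := by
      intro n
      exact (((hLintQ (fQ + t n • h)).sub (hLintQ fQ)).div_const (t n))
    -- bound
    set bound : X × Y → ℝ := fun z =>
      |(L' z.1 z.2 (⟪fQ, Φ z.1⟫)) * ⟪h, Φ z.1⟫| +
        |L z.1 z.2 (⟪fP, Φ z.1⟫) - L z.1 z.2 (⟪fQ, Φ z.1⟫)| with hbound
    have hboundint : Integrable bound Q :=
      hintInnerQ.abs.add ((hLintQ fP).sub (hLintQ fQ)).abs
    have hfPeq : ∀ z : X × Y, ⟪fQ, Φ z.1⟫ + ⟪h, Φ z.1⟫ = ⟪fP, Φ z.1⟫ := by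
      intro z; rw [hh, inner_sub_left]; ring
    have hFbound : ∀ n, ∀ᵐ z ∂Q, ‖F n z‖ ≤ bound z := by
      intro n
      refine Filter.Eventually.of_forall fun z => ?_
      have hq := convex_quot_bounds (hLconv z.1 z.2) (hderiv z.1 z.2)
        (⟪fQ, Φ z.1⟫) (⟪h, Φ z.1⟫) (t n) (ht0 n) (ht1 n)
      rw [hfPeq z] at hq
      have hFz : F n z = (L z.1 z.2 (⟪fQ, Φ z.1⟫ + t n * ⟪h, Φ z.1⟫) -
          L z.1 z.2 (⟪fQ, Φ z.1⟫)) / t n := by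
        simp only [hF]; rw [hinner_eq n z]
      rw [Real.norm_eq_abs, hFz]
      rw [abs_le]
      constructor
      · calc -(bound z) ≤ -|(L' z.1 z.2 (⟪fQ, Φ z.1⟫)) * ⟪h, Φ z.1⟫| :=
              neg_le_neg (le_add_of_nonneg_right (abs_nonneg _))
          _ ≤ (L' z.1 z.2 (⟪fQ, Φ z.1⟫)) * ⟪h, Φ z.1⟫ := neg_abs_le _
          _ ≤ _ := hq.1
      · calc _ ≤ L z.1 z.2 (⟪fP, Φ z.1⟫) - L z.1 z.2 (⟪fQ, Φ z.1⟫) := hq.2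
          _ ≤ |L z.1 z.2 (⟪fP, Φ z.1⟫) - L z.1 z.2 (⟪fQ, Φ z.1⟫)| := le_abs_self _
          _ ≤ bound z := le_add_of_nonneg_left (abs_nonneg _)
    have hFtendsto : ∀ᵐ z ∂Q, Filter.Tendsto (fun n => F n z) Filter.atTop
        (nhds ((L' z.1 z.2 (⟪fQ, Φ z.1⟫)) * ⟪h, Φ z.1⟫)) := by
      refine Filter.Eventually.of_forall fun z => ?_
      set u := ⟪fQ, Φ z.1⟫ with hu
      set a := ⟪h, Φ z.1⟫ with ha
      have hφ : HasDerivAt (fun s : ℝ => L z.1 z.2 (u + s * a))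
          ((L' z.1 z.2 u) * a) 0 := by
        have hlin : HasDerivAt (fun s : ℝ => u + s * a) a 0 := by
          simpa using ((hasDerivAt_id (0:ℝ)).mul_const a).const_add u
        have := (hderiv z.1 z.2 (u + 0 * a)).comp 0 hlin
        simpa [Function.comp_def] using this
      have hslope := hasDerivAt_iff_tendsto_slope.mp hφ
      have hts : Filter.Tendsto t Filter.atTop (nhdsWithin 0 {(0:ℝ)}ᶜ) := by
        refine tendsto_nhdsWithin_of_tendsto_nhds_of_eventually_within _
          tendsto_one_div_add_atTop_nhds_zero_nat
          (Filter.Eventually.of_forall fun n => ?_)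
        exact ne_of_gt (ht0 n)
      have hcomp := hslope.comp hts
      have : (fun n => slope (fun s : ℝ => L z.1 z.2 (u + s * a)) 0 (t n)) =
          fun n => F n z := by
        funext n
        simp only [slope_def_field, hF, hinner_eq n z, ← hu, ← ha]
        simp [div_eq_mul_inv]
      rw [Function.comp_def, this] at hcomp
      exact hcomp
    have hlim := tendsto_integral_of_dominated_convergence bound
      (fun n => (hFint n).aestronglyMeasurable) hboundint hFbound hFtendsto
    rw [hinnerQ] at hlim
    -- lower bound on each ∫ F n
    have hlow : ∀ n, -(lam * (2 * ⟪fQ, h⟫ + t n * ‖h‖ ^ 2)) ≤ ∫ z, F n z ∂Q := by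
      intro n
      have hmin := hminQ (fQ + t n • h)
      have hIeq : ∫ z, F n z ∂Q =
          ((∫ z, L z.1 z.2 (⟪fQ + t n • h, Φ z.1⟫) ∂Q) -
            ∫ z, L z.1 z.2 (⟪fQ, Φ z.1⟫) ∂Q) / t n := by
        simp only [hF, div_eq_mul_inv, integral_mul_const]
        rw [integral_sub (hLintQ (fQ + t n • h)) (hLintQ fQ)]
      have hnorm : ‖fQ + t n • h‖ ^ 2 =
          ‖fQ‖ ^ 2 + 2 * (t n) * ⟪fQ, h⟫ + (t n) ^ 2 * ‖h‖ ^ 2 := by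
        rw [norm_add_sq_real, real_inner_smul_right, norm_smul,
          Real.norm_eq_abs, mul_pow, sq_abs]
        ring
      rw [hIeq, le_div_iff₀ (ht0 n)]
      nlinarith [ht0 n]
    have hrhs : Filter.Tendsto (fun n => -(lam * (2 * ⟪fQ, h⟫ + t n * ‖h‖ ^ 2)))
        Filter.atTop (nhds (-(lam * (2 * ⟪fQ, h⟫)))) := by
      have h1 : Filter.Tendsto t Filter.atTop (nhds 0) :=
        tendsto_one_div_add_atTop_nhds_zero_nat
      have h2 := ((h1.mul_const (‖h‖ ^ 2)).const_add (2 * ⟪fQ, h⟫)).const_mul lam |>.neg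
      simpa only [zero_mul, add_zero] using h2
    exact le_of_tendsto_of_tendsto' hrhs hlim hlow
  -- Combine
  have key : lam * ‖h‖ ^ 2 ≤ ⟪h, D⟫ - ⟪h, B⟫ := by
    have hexp : ‖h‖ ^ 2 = ‖fP‖ ^ 2 - 2 * ⟪fP, fQ⟫ + ‖fQ‖ ^ 2 := by
      rw [hh, norm_sub_sq_real]
    have hfQh : ⟪fQ, h⟫ = ⟪fP, fQ⟫ - ‖fQ‖ ^ 2 := by
      rw [hh, inner_sub_right, real_inner_self_eq_norm_sq, real_inner_comm]
    nlinarith [stepA, stepB]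
  have hcs : ⟪h, D - B⟫ ≤ ‖h‖ * ‖D - B‖ := real_inner_le_norm h (D - B)
  rw [inner_sub_right] at hcs
  have hDB : ‖D - B‖ = ‖B - D‖ := norm_sub_rev D B
  have hfinal : lam * ‖h‖ ^ 2 ≤ ‖h‖ * ‖B - D‖ := by
    rw [← hDB]; linarith
  -- conclude
  rcases eq_or_lt_of_le (norm_nonneg h) with h0 | h0
  · rw [hh] at h0
    rw [← h0]
    positivity
  · have : lam * ‖h‖ ≤ ‖B - D‖ := by
      have := mul_le_mul_of_nonneg_left hfinal (le_of_lt (inv_pos.mpr h0))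
      rw [← mul_assoc, ← mul_assoc] at this
      nlinarith
    calc ‖fP - fQ‖ = ‖h‖ := by rw [hh]
      _ ≤ lam⁻¹ * ‖B - D‖ := by
          have h3 : ‖h‖ ≤ ‖B - D‖ / lam := (le_div_iff₀' hlam).mpr this
          simpa [div_eq_inv_mul] using h3
      _ = _ := by rw [hB, hD]
end
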